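/- For every γ ∈ (1,2), the triple integral A_γ = ∫₀^∞∫₀^∞∫₀^∞ (xyz)^{-γ-1}·(1-e^{-xy})(1-e^{-xz})(1-e^{-yz}) dx dy dz is finite. -/
import Mathlib

open MeasureTheory Set

set_option linter.unusedVariables false


-- basic pointwise bounds
lemma aux_one_sub_exp_nonneg {u : ℝ} (hu : 0 ≤ u) : 0 ≤ 1 - Real.exp (-u) := by
  have : Real.exp (-u) ≤ Real.exp 0 := Real.exp_le_exp.2 (by linarith)
  simpa [Real.exp_zero] using this

lemma aux_one_sub_exp_le_min {u : ℝ} (hu : 0 ≤ u) : 1 - Real.exp (-u) ≤ min u 1 := by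
  refine le_min ?_ ?_
  · have := Real.add_one_le_exp (-u); linarith
  · have := Real.exp_nonneg (-u); linarith

lemma aux_min_le_rpow {u s : ℝ} (hu : 0 < u) (hs0 : 0 ≤ s) (hs1 : s ≤ 1) :
    min u 1 ≤ u ^ s := by
  rcases le_total u 1 with h | h
  · calc min u 1 ≤ u := min_le_left _ _
    _ = u ^ (1:ℝ) := (Real.rpow_one u).symm
    _ ≤ u ^ s := Real.rpow_le_rpow_of_exponent_ge hu h hs1
  · calc min u 1 ≤ 1 := min_le_right _ _
    _ ≤ u ^ s := Real.one_le_rpow h hs0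

lemma aux_min_nonneg {c t : ℝ} (hc : 0 ≤ c) (ht : 0 ≤ t) : 0 ≤ min (c*t) 1 :=
  le_min (by positivity) one_pos.le

-- power integrals
lemma lint_Ioi_rpow {p b : ℝ} (hp : p < -1) (hb : 0 < b) :
    ∫⁻ t in Ioi b, ENNReal.ofReal (t ^ p) = ENNReal.ofReal (-b ^ (p+1) / (p+1)) := by
  rw [← integral_Ioi_rpow_of_lt hp hb,
    ← ofReal_integral_eq_lintegral_ofReal (integrableOn_Ioi_rpow_of_lt hp hb)]
  exact (ae_restrict_iff' measurableSet_Ioi).2 (ae_of_all _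
    (fun t ht => Real.rpow_nonneg (le_of_lt (hb.trans ht)) p))

lemma lint_Ioc_rpow {p b : ℝ} (hp : -1 < p) (hb : 0 < b) :
    ∫⁻ t in Ioc (0:ℝ) b, ENNReal.ofReal (t ^ p) = ENNReal.ofReal (b ^ (p+1) / (p+1)) := by
  have hint : IntervalIntegrable (fun t : ℝ => t ^ p) volume 0 b :=
    intervalIntegral.intervalIntegrable_rpow' hp
  have hIoc : IntegrableOn (fun t : ℝ => t ^ p) (Ioc 0 b) := by
    rw [intervalIntegrable_iff_integrableOn_Ioc_of_le hb.le] at hint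
    exact hint
  have hval : ∫ t in Ioc (0:ℝ) b, t ^ p = b ^ (p+1) / (p+1) := by
    rw [← intervalIntegral.integral_of_le hb.le, integral_rpow (Or.inl hp),
      Real.zero_rpow (by linarith)]
    ring
  rw [← hval, ← ofReal_integral_eq_lintegral_ofReal hIoc]
  exact (ae_restrict_iff' measurableSet_Ioc).2 (ae_of_all _
    (fun t ht => Real.rpow_nonneg ht.1.le p))


lemma aux_inv_rpow {c : ℝ} (hc : 0 < c) (x : ℝ) : (1/c) ^ x = c ^ (-x) := by
  rw [one_div, Real.inv_rpow hc.le, Real.rpow_neg hc.le]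

-- bound on (0, d]: use min(ct,1) ≤ ct
lemma lint_Ioc_min {q c d : ℝ} (hq : -2 < q) (hc : 0 < c) (hd : 0 < d) :
    ∫⁻ t in Ioc (0:ℝ) d, ENNReal.ofReal (t ^ q * min (c*t) 1)
      ≤ ENNReal.ofReal (c * (d ^ (q+2) / (q+2))) := by
  have step : ∫⁻ t in Ioc (0:ℝ) d, ENNReal.ofReal (t ^ q * min (c*t) 1)
      ≤ ∫⁻ t in Ioc (0:ℝ) d, ENNReal.ofReal c * ENNReal.ofReal (t ^ (q+1)) := by
    refine setLIntegral_mono' measurableSet_Ioc (fun t ht => ?_)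
    rw [← ENNReal.ofReal_mul hc.le]
    apply ENNReal.ofReal_le_ofReal
    calc t ^ q * min (c*t) 1 ≤ t ^ q * (c*t) := by
          have := Real.rpow_nonneg ht.1.le q
          exact mul_le_mul_of_nonneg_left (min_le_left _ _) this
    _ = c * t ^ (q+1) := by rw [Real.rpow_add_one (ne_of_gt ht.1)]; ring
  refine step.trans ?_
  rw [lintegral_const_mul' _ _ ENNReal.ofReal_ne_top, lint_Ioc_rpow (by linarith) hd,
    ← ENNReal.ofReal_mul hc.le]
  ring_nf
  exact le_rfl

-- bound on (d, ∞): use min(ct,1) ≤ 1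
lemma lint_Ioi_min {q c d : ℝ} (hq : q < -1) (hc : 0 < c) (hd : 0 < d) :
    ∫⁻ t in Ioi d, ENNReal.ofReal (t ^ q * min (c*t) 1)
      ≤ ENNReal.ofReal (-d ^ (q+1) / (q+1)) := by
  have step : ∫⁻ t in Ioi d, ENNReal.ofReal (t ^ q * min (c*t) 1)
      ≤ ∫⁻ t in Ioi d, ENNReal.ofReal (t ^ q) := by
    refine setLIntegral_mono' measurableSet_Ioi (fun t ht => ?_)
    apply ENNReal.ofReal_le_ofReal
    have h0 : (0:ℝ) < t := hd.trans ht
    have := Real.rpow_nonneg h0.le q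
    calc t ^ q * min (c*t) 1 ≤ t ^ q * 1 :=
      mul_le_mul_of_nonneg_left (min_le_right _ _) this
    _ = t ^ q := mul_one _
  exact step.trans (le_of_eq (lint_Ioi_rpow hq hd))

-- full bound on (0, ∞): split at 1/c
lemma lint_full_min {q c : ℝ} (hq1 : -2 < q) (hq2 : q < -1) (hc : 0 < c) :
    ∫⁻ t in Ioi (0:ℝ), ENNReal.ofReal (t ^ q * min (c*t) 1)
      ≤ ENNReal.ofReal ((1/(q+2) + 1/(-(q+1))) * c ^ (-(q+1))) := by
  have h1c : (0:ℝ) < 1/c := by positivity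
  rw [← Ioc_union_Ioi_eq_Ioi h1c.le,
    lintegral_union measurableSet_Ioi (Ioc_disjoint_Ioi le_rfl)]
  have b1 := lint_Ioc_min hq1 hc h1c
  have b2 := lint_Ioi_min hq2 hc h1c
  refine (add_le_add b1 b2).trans (le_of_eq ?_)
  rw [← ENNReal.ofReal_add (by
        have h2 : (0:ℝ) < q + 2 := by linarith
        positivity)
      (by
        have : (0:ℝ) ≤ -(1/c) ^ (q+1) / (q+1) := by
          rw [div_nonneg_iff]
          right
          constructor
          · simp only [neg_nonpos]; positivity
          · linarith
        exact this)]
  congr 1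
  rw [aux_inv_rpow hc, aux_inv_rpow hc]
  have e1 : c * c ^ (-(q+2)) = c ^ (-(q+1)) := by
    nth_rewrite 1 [← Real.rpow_one c]
    rw [← Real.rpow_add hc]
    congr 1; ring
  have hq2' : q + 2 ≠ 0 := by linarith
  have hq1' : q + 1 ≠ 0 := by linarith
  have key : ∀ A : ℝ, A/(q+2) + -A/(q+1) = (1/(q+2) + 1/(-(q+1))) * A := by
    intro A; rw [div_neg]; ring
  rw [← mul_div_assoc, e1]
  exact key _


lemma pow_xx {x : ℝ} (hx : 0 < x) (a b : ℝ) : x ^ a * x ^ b = x ^ (a+b) :=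
  (Real.rpow_add hx a b).symm

lemma xmul {x : ℝ} (hx : 0 < x) (c : ℝ) : x * x ^ c = x ^ (c+1) := by
  rw [Real.rpow_add_one (ne_of_gt hx)]; ring

lemma zlev {γ s x y : ℝ} (hγ1 : 1 < γ) (hγ2 : γ < 2) (hs1 : γ - 1 < s) (hs2 : s < γ/2)
    (hx : 0 < x) (hy : 0 < y) :
    ∫⁻ z in Ioi (0:ℝ),
      ENNReal.ofReal ((x * y * z) ^ (-γ - 1) * (1 - Real.exp (-(x * y)))
        * (1 - Real.exp (-(x * z))) * (1 - Real.exp (-(y * z))))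
      ≤ ENNReal.ofReal ((x*y) ^ (-γ-1) * min (x*y) 1 *
          ((1/(s-γ+1) + 1/(γ-s)) * (x ^ (γ-s) * y ^ s))) := by
  have hs0 : 0 < s := by linarith
  have hs3 : s < 1 := by linarith
  have hCnn : 0 ≤ (x*y) ^ (-γ-1) * min (x*y) 1 * y ^ s :=
    mul_nonneg (mul_nonneg (Real.rpow_nonneg (by positivity) _)
      (aux_min_nonneg hx.le hy.le)) (Real.rpow_nonneg hy.le _)
  have step : ∀ z ∈ Ioi (0:ℝ),
      ENNReal.ofReal ((x * y * z) ^ (-γ - 1) * (1 - Real.exp (-(x * y)))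
        * (1 - Real.exp (-(x * z))) * (1 - Real.exp (-(y * z))))
      ≤ ENNReal.ofReal ((x*y) ^ (-γ-1) * min (x*y) 1 * y ^ s)
        * ENNReal.ofReal (z ^ (s-γ-1) * min (x*z) 1) := by
    intro z hz
    have hz0 : (0:ℝ) < z := hz
    rw [← ENNReal.ofReal_mul hCnn]
    apply ENNReal.ofReal_le_ofReal
    have hP : (0:ℝ) ≤ (x*y*z) ^ (-γ-1) := Real.rpow_nonneg (by positivity) _
    have hA := aux_one_sub_exp_le_min (u := x*y) (by positivity)
    have hB := aux_one_sub_exp_le_min (u := x*z) (by positivity)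
    have hB0 := aux_one_sub_exp_nonneg (u := x*z) (by positivity)
    have hC : 1 - Real.exp (-(y*z)) ≤ (y*z) ^ s :=
      (aux_one_sub_exp_le_min (by positivity)).trans
        (aux_min_le_rpow (by positivity) hs0.le hs3.le)
    have hC0 := aux_one_sub_exp_nonneg (u := y*z) (by positivity)
    have big : (x * y * z) ^ (-γ - 1) * (1 - Real.exp (-(x * y)))
        * (1 - Real.exp (-(x * z))) * (1 - Real.exp (-(y * z)))
        ≤ (x*y*z) ^ (-γ-1) * min (x*y) 1 * min (x*z) 1 * (y*z) ^ s := by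
      have h1 : (x * y * z) ^ (-γ - 1) * (1 - Real.exp (-(x * y)))
          ≤ (x*y*z) ^ (-γ-1) * min (x*y) 1 := mul_le_mul_of_nonneg_left hA hP
      have h2 : (x * y * z) ^ (-γ - 1) * (1 - Real.exp (-(x * y))) * (1 - Real.exp (-(x * z)))
          ≤ (x*y*z) ^ (-γ-1) * min (x*y) 1 * min (x*z) 1 :=
        mul_le_mul h1 hB hB0 (mul_nonneg hP (aux_min_nonneg hx.le hy.le))
      exact mul_le_mul h2 hC hC0
        (mul_nonneg (mul_nonneg hP (aux_min_nonneg hx.le hy.le)) (aux_min_nonneg hx.le hz0.le))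
    refine big.trans (le_of_eq ?_)
    rw [Real.mul_rpow (by positivity) hz0.le, Real.mul_rpow hy.le hz0.le,
      show (x*y) ^ (-γ-1) * z ^ (-γ-1) * min (x*y) 1 * min (x*z) 1 * (y ^ s * z ^ s)
        = ((x*y) ^ (-γ-1) * min (x*y) 1 * y ^ s) * ((z ^ (-γ-1) * z ^ s) * min (x*z) 1) from by ring,
      pow_xx hz0, show (-γ-1+s:ℝ) = s-γ-1 from by ring]
  calc ∫⁻ z in Ioi (0:ℝ),
      ENNReal.ofReal ((x * y * z) ^ (-γ - 1) * (1 - Real.exp (-(x * y)))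
        * (1 - Real.exp (-(x * z))) * (1 - Real.exp (-(y * z))))
      ≤ ∫⁻ z in Ioi (0:ℝ), ENNReal.ofReal ((x*y) ^ (-γ-1) * min (x*y) 1 * y ^ s)
          * ENNReal.ofReal (z ^ (s-γ-1) * min (x*z) 1) :=
        setLIntegral_mono' measurableSet_Ioi step
    _ = ENNReal.ofReal ((x*y) ^ (-γ-1) * min (x*y) 1 * y ^ s)
          * ∫⁻ z in Ioi (0:ℝ), ENNReal.ofReal (z ^ (s-γ-1) * min (x*z) 1) :=
        lintegral_const_mul' _ _ ENNReal.ofReal_ne_top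
    _ ≤ ENNReal.ofReal ((x*y) ^ (-γ-1) * min (x*y) 1 * y ^ s)
          * ENNReal.ofReal ((1/((s-γ-1)+2) + 1/(-((s-γ-1)+1))) * x ^ (-((s-γ-1)+1))) :=
        mul_le_mul_right (lint_full_min (by linarith) (by linarith) hx) _
    _ = ENNReal.ofReal ((x*y) ^ (-γ-1) * min (x*y) 1 *
          ((1/(s-γ+1) + 1/(γ-s)) * (x ^ (γ-s) * y ^ s))) := by
        rw [← ENNReal.ofReal_mul hCnn]
        congr 1
        rw [show (-((s-γ-1)+1) : ℝ) = γ-s from by ring, show ((s-γ-1)+2 : ℝ) = s-γ+1 from by ring]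
        ring


lemma zlev' {γ s x y : ℝ} (hγ1 : 1 < γ) (hγ2 : γ < 2) (hs1 : γ - 1 < s) (hs2 : s < γ/2)
    (hx : 0 < x) (hy : 0 < y) :
    ∫⁻ z in Ioi (0:ℝ),
      ENNReal.ofReal ((x * y * z) ^ (-γ - 1) * (1 - Real.exp (-(x * y)))
        * (1 - Real.exp (-(x * z))) * (1 - Real.exp (-(y * z))))
      ≤ ENNReal.ofReal ((x*y) ^ (-γ-1) * min (x*y) 1 *
          ((1/(s-γ+1) + 1/(γ-s)) * (y ^ (γ-s) * x ^ s))) := by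
  have h := zlev hγ1 hγ2 hs1 hs2 hy hx
  refine le_trans (le_of_eq ?_) (h.trans (le_of_eq ?_))
  · refine lintegral_congr (fun z => ?_)
    congr 1
    rw [mul_comm x y]
    ring
  · congr 1
    rw [mul_comm y x]

section pieces
variable {γ s x : ℝ} (hγ1 : 1 < γ) (hγ2 : γ < 2) (hs1 : γ - 1 < s) (hs2 : s < γ/2)
  (hx : 0 < x)

lemma Knn (hγ1 : 1 < γ) (hγ2 : γ < 2) (hs1 : γ - 1 < s) (hs2 : s < γ/2) :
    0 ≤ 1/(s-γ+1) + 1/(γ-s) := by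
  have h1 : 0 < s-γ+1 := by linarith
  have h2 : 0 < γ-s := by linarith
  have := div_pos one_pos h1
  have := div_pos one_pos h2
  linarith

include hγ1 hγ2 hs1 hs2 hx in
lemma sub1 :
    ∫⁻ y in Ioc (0:ℝ) x, (∫⁻ z in Ioi (0:ℝ),
      ENNReal.ofReal ((x * y * z) ^ (-γ - 1) * (1 - Real.exp (-(x * y)))
        * (1 - Real.exp (-(x * z))) * (1 - Real.exp (-(y * z)))))
      ≤ ENNReal.ofReal (x ^ (-γ-1) * x ^ s * (1/(s-γ+1) + 1/(γ-s)))
        * ∫⁻ y in Ioc (0:ℝ) x, ENNReal.ofReal (y ^ (-s-1) * min (x*y) 1) := by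
  have cnn : 0 ≤ x ^ (-γ-1) * x ^ s * (1/(s-γ+1) + 1/(γ-s)) :=
    mul_nonneg (mul_nonneg (Real.rpow_nonneg hx.le _) (Real.rpow_nonneg hx.le _))
      (Knn hγ1 hγ2 hs1 hs2)
  rw [← lintegral_const_mul' _ _ ENNReal.ofReal_ne_top]
  refine setLIntegral_mono' measurableSet_Ioc (fun y hy => ?_)
  refine (zlev' hγ1 hγ2 hs1 hs2 hx hy.1).trans (le_of_eq ?_)
  rw [← ENNReal.ofReal_mul cnn]
  congr 1
  rw [Real.mul_rpow hx.le hy.1.le,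
    show x ^ (-γ-1) * y ^ (-γ-1) * min (x*y) 1 * ((1/(s-γ+1) + 1/(γ-s)) * (y ^ (γ-s) * x ^ s))
      = x ^ (-γ-1) * x ^ s * (1/(s-γ+1) + 1/(γ-s)) * ((y ^ (-γ-1) * y ^ (γ-s)) * min (x*y) 1)
      from by ring,
    pow_xx hy.1, show (-γ-1+(γ-s) : ℝ) = -s-1 from by ring]

include hγ1 hγ2 hs1 hs2 hx in
lemma sub2 :
    ∫⁻ y in Ioi x, (∫⁻ z in Ioi (0:ℝ),
      ENNReal.ofReal ((x * y * z) ^ (-γ - 1) * (1 - Real.exp (-(x * y)))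
        * (1 - Real.exp (-(x * z))) * (1 - Real.exp (-(y * z)))))
      ≤ ENNReal.ofReal (x ^ (-γ-1) * x ^ (γ-s) * (1/(s-γ+1) + 1/(γ-s)))
        * ∫⁻ y in Ioi x, ENNReal.ofReal (y ^ (s-γ-1) * min (x*y) 1) := by
  have cnn : 0 ≤ x ^ (-γ-1) * x ^ (γ-s) * (1/(s-γ+1) + 1/(γ-s)) :=
    mul_nonneg (mul_nonneg (Real.rpow_nonneg hx.le _) (Real.rpow_nonneg hx.le _))
      (Knn hγ1 hγ2 hs1 hs2)
  rw [← lintegral_const_mul' _ _ ENNReal.ofReal_ne_top]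
  refine setLIntegral_mono' measurableSet_Ioi (fun y hy => ?_)
  have hy0 : (0:ℝ) < y := hx.trans hy
  refine (zlev hγ1 hγ2 hs1 hs2 hx hy0).trans (le_of_eq ?_)
  rw [← ENNReal.ofReal_mul cnn]
  congr 1
  rw [Real.mul_rpow hx.le hy0.le,
    show x ^ (-γ-1) * y ^ (-γ-1) * min (x*y) 1 * ((1/(s-γ+1) + 1/(γ-s)) * (x ^ (γ-s) * y ^ s))
      = x ^ (-γ-1) * x ^ (γ-s) * (1/(s-γ+1) + 1/(γ-s)) * ((y ^ (-γ-1) * y ^ s) * min (x*y) 1)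
      from by ring,
    pow_xx hy0, show (-γ-1+s : ℝ) = s-γ-1 from by ring]

end pieces

section pbounds
variable {γ s x : ℝ} (hγ1 : 1 < γ) (hγ2 : γ < 2) (hs1 : γ - 1 < s) (hs2 : s < γ/2)
  (hx : 0 < x)

include hγ1 hγ2 hs1 hs2 hx in
lemma P1 :
    ∫⁻ y in Ioc (0:ℝ) x, (∫⁻ z in Ioi (0:ℝ),
      ENNReal.ofReal ((x * y * z) ^ (-γ - 1) * (1 - Real.exp (-(x * y)))
        * (1 - Real.exp (-(x * z))) * (1 - Real.exp (-(y * z)))))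
      ≤ ENNReal.ofReal ((1/(s-γ+1) + 1/(γ-s))/(1-s) * x ^ (1-γ)) := by
  have hs3 : s < 1 := by linarith
  have cnn : 0 ≤ x ^ (-γ-1) * x ^ s * (1/(s-γ+1) + 1/(γ-s)) :=
    mul_nonneg (mul_nonneg (Real.rpow_nonneg hx.le _) (Real.rpow_nonneg hx.le _))
      (Knn hγ1 hγ2 hs1 hs2)
  refine (sub1 hγ1 hγ2 hs1 hs2 hx).trans ?_
  refine (mul_le_mul_right (lint_Ioc_min (q := -s-1) (by linarith) hx hx) _).trans (le_of_eq ?_)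
  rw [← ENNReal.ofReal_mul cnn]
  congr 1
  rw [show (-s-1+2:ℝ) = 1-s from by ring, mul_div_assoc', xmul hx,
    show x ^ (-γ-1) * x ^ s * (1/(s-γ+1) + 1/(γ-s)) * (x ^ (1-s+1) / (1-s))
      = (1/(s-γ+1) + 1/(γ-s))/(1-s) * (x ^ (-γ-1) * x ^ s * x ^ (1-s+1)) from by ring,
    pow_xx hx, pow_xx hx, show (-γ-1+s+(1-s+1):ℝ) = 1-γ from by ring]

include hγ1 hγ2 hs1 hs2 hx in
lemma P2 :
    ∫⁻ y in Ioc (0:ℝ) x, (∫⁻ z in Ioi (0:ℝ),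
      ENNReal.ofReal ((x * y * z) ^ (-γ - 1) * (1 - Real.exp (-(x * y)))
        * (1 - Real.exp (-(x * z))) * (1 - Real.exp (-(y * z)))))
      ≤ ENNReal.ofReal ((1/(s-γ+1) + 1/(γ-s)) * (1/(1-s) + 1/s) * x ^ (2*s-γ-1)) := by
  have hs0 : 0 < s := by linarith
  have hs3 : s < 1 := by linarith
  have cnn : 0 ≤ x ^ (-γ-1) * x ^ s * (1/(s-γ+1) + 1/(γ-s)) :=
    mul_nonneg (mul_nonneg (Real.rpow_nonneg hx.le _) (Real.rpow_nonneg hx.le _))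
      (Knn hγ1 hγ2 hs1 hs2)
  refine (sub1 hγ1 hγ2 hs1 hs2 hx).trans ?_
  refine (mul_le_mul_right ((lintegral_mono_set Ioc_subset_Ioi_self).trans
    (lint_full_min (q := -s-1) (by linarith) (by linarith) hx)) _).trans (le_of_eq ?_)
  rw [← ENNReal.ofReal_mul cnn]
  congr 1
  rw [show (-s-1+2:ℝ) = 1-s from by ring, show (-(-s-1+1):ℝ) = s from by ring,
    show x ^ (-γ-1) * x ^ s * (1/(s-γ+1) + 1/(γ-s)) * ((1/(1-s) + 1/s) * x ^ s)
      = (1/(s-γ+1) + 1/(γ-s)) * (1/(1-s) + 1/s) * (x ^ (-γ-1) * x ^ s * x ^ s) from by ring,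
    pow_xx hx, pow_xx hx, show (-γ-1+s+s:ℝ) = 2*s-γ-1 from by ring]

include hγ1 hγ2 hs1 hs2 hx in
lemma P3 :
    ∫⁻ y in Ioi x, (∫⁻ z in Ioi (0:ℝ),
      ENNReal.ofReal ((x * y * z) ^ (-γ - 1) * (1 - Real.exp (-(x * y)))
        * (1 - Real.exp (-(x * z))) * (1 - Real.exp (-(y * z)))))
      ≤ ENNReal.ofReal ((1/(s-γ+1) + 1/(γ-s)) * (1/(s-γ+1) + 1/(γ-s)) * x ^ (γ-2*s-1)) := by
  have cnn : 0 ≤ x ^ (-γ-1) * x ^ (γ-s) * (1/(s-γ+1) + 1/(γ-s)) :=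
    mul_nonneg (mul_nonneg (Real.rpow_nonneg hx.le _) (Real.rpow_nonneg hx.le _))
      (Knn hγ1 hγ2 hs1 hs2)
  refine (sub2 hγ1 hγ2 hs1 hs2 hx).trans ?_
  refine (mul_le_mul_right ((lintegral_mono_set (Ioi_subset_Ioi hx.le)).trans
    (lint_full_min (q := s-γ-1) (by linarith) (by linarith) hx)) _).trans (le_of_eq ?_)
  rw [← ENNReal.ofReal_mul cnn]
  congr 1
  rw [show (s-γ-1+2:ℝ) = s-γ+1 from by ring, show (-(s-γ-1+1):ℝ) = γ-s from by ring,
    show x ^ (-γ-1) * x ^ (γ-s) * (1/(s-γ+1) + 1/(γ-s)) * ((1/(s-γ+1) + 1/(γ-s)) * x ^ (γ-s))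
      = (1/(s-γ+1) + 1/(γ-s)) * (1/(s-γ+1) + 1/(γ-s)) * (x ^ (-γ-1) * x ^ (γ-s) * x ^ (γ-s))
      from by ring,
    pow_xx hx, pow_xx hx, show (-γ-1+(γ-s)+(γ-s):ℝ) = γ-2*s-1 from by ring]

include hγ1 hγ2 hs1 hs2 hx in
lemma P4 :
    ∫⁻ y in Ioi x, (∫⁻ z in Ioi (0:ℝ),
      ENNReal.ofReal ((x * y * z) ^ (-γ - 1) * (1 - Real.exp (-(x * y)))
        * (1 - Real.exp (-(x * z))) * (1 - Real.exp (-(y * z)))))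
      ≤ ENNReal.ofReal ((1/(s-γ+1) + 1/(γ-s))/(γ-s) * x ^ (-γ-1)) := by
  have hgs : (0:ℝ) < γ - s := by linarith
  have cnn : 0 ≤ x ^ (-γ-1) * x ^ (γ-s) * (1/(s-γ+1) + 1/(γ-s)) :=
    mul_nonneg (mul_nonneg (Real.rpow_nonneg hx.le _) (Real.rpow_nonneg hx.le _))
      (Knn hγ1 hγ2 hs1 hs2)
  refine (sub2 hγ1 hγ2 hs1 hs2 hx).trans ?_
  refine (mul_le_mul_right (lint_Ioi_min (q := s-γ-1) (by linarith) hx hx) _).trans (le_of_eq ?_)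
  rw [← ENNReal.ofReal_mul cnn]
  congr 1
  have neg1 : (-1:ℝ)/(s-γ) = 1/(γ-s) := by
    rw [show (s-γ:ℝ) = -(γ-s) from by ring, div_neg]
    ring
  rw [show (s-γ-1+1:ℝ) = s-γ from by ring,
    show x ^ (-γ-1) * x ^ (γ-s) * (1/(s-γ+1) + 1/(γ-s)) * (-x ^ (s-γ) / (s-γ))
      = (1/(s-γ+1) + 1/(γ-s)) * (-1/(s-γ)) * (x ^ (-γ-1) * x ^ (γ-s) * x ^ (s-γ))
      from by ring,
    neg1, pow_xx hx, pow_xx hx, show (-γ-1+(γ-s)+(s-γ):ℝ) = -γ-1 from by ring]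
  ring

end pbounds


lemma split_dom (f : ℝ → ENNReal) {x : ℝ} (hx : 0 < x) :
    ∫⁻ y in Ioi (0:ℝ), f y = (∫⁻ y in Ioc (0:ℝ) x, f y) + ∫⁻ y in Ioi x, f y := by
  rw [← Ioc_union_Ioi_eq_Ioi hx.le, lintegral_union measurableSet_Ioi (Ioc_disjoint_Ioi le_rfl)]

lemma lint_Ioc_pow_lt_top {C p : ℝ} (hp : -1 < p) :
    ∫⁻ x in Ioc (0:ℝ) 1, ENNReal.ofReal (C * x ^ p) < ⊤ := by
  rcases le_total C 0 with hC | hC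
  · have : ∀ x ∈ Ioc (0:ℝ) 1, ENNReal.ofReal (C * x ^ p) ≤ ENNReal.ofReal 0 := by
      intro x hx
      exact ENNReal.ofReal_le_ofReal (mul_nonpos_of_nonpos_of_nonneg hC (Real.rpow_nonneg hx.1.le p))
    calc ∫⁻ x in Ioc (0:ℝ) 1, ENNReal.ofReal (C * x ^ p)
        ≤ ∫⁻ _ in Ioc (0:ℝ) 1, ENNReal.ofReal 0 := setLIntegral_mono' measurableSet_Ioc this
      _ < ⊤ := by simp
  · have heq : ∀ x, ENNReal.ofReal (C * x ^ p) = ENNReal.ofReal C * ENNReal.ofReal (x ^ p) :=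
      fun x => ENNReal.ofReal_mul hC
    simp only [heq]
    rw [lintegral_const_mul' _ _ ENNReal.ofReal_ne_top, lint_Ioc_rpow hp one_pos]
    exact ENNReal.mul_lt_top ENNReal.ofReal_lt_top ENNReal.ofReal_lt_top

lemma lint_Ioi_pow_lt_top {C p : ℝ} (hp : p < -1) :
    ∫⁻ x in Ioi (1:ℝ), ENNReal.ofReal (C * x ^ p) < ⊤ := by
  rcases le_total C 0 with hC | hC
  · have : ∀ x ∈ Ioi (1:ℝ), ENNReal.ofReal (C * x ^ p) ≤ ENNReal.ofReal 0 := by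
      intro x hx
      have hx0 : (0:ℝ) < x := lt_trans one_pos hx
      exact ENNReal.ofReal_le_ofReal (mul_nonpos_of_nonpos_of_nonneg hC (Real.rpow_nonneg hx0.le p))
    calc ∫⁻ x in Ioi (1:ℝ), ENNReal.ofReal (C * x ^ p)
        ≤ ∫⁻ _ in Ioi (1:ℝ), ENNReal.ofReal 0 := setLIntegral_mono' measurableSet_Ioi this
      _ < ⊤ := by simp
  · have heq : ∀ x, ENNReal.ofReal (C * x ^ p) = ENNReal.ofReal C * ENNReal.ofReal (x ^ p) :=
      fun x => ENNReal.ofReal_mul hC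
    simp only [heq]
    rw [lintegral_const_mul' _ _ ENNReal.ofReal_ne_top, lint_Ioi_rpow hp one_pos]
    exact ENNReal.mul_lt_top ENNReal.ofReal_lt_top ENNReal.ofReal_lt_top

theorem stmt4 (γ : ℝ) (h1 : 1 < γ) (h2 : γ < 2) :
    ∫⁻ x in Set.Ioi (0:ℝ), ∫⁻ y in Set.Ioi (0:ℝ), ∫⁻ z in Set.Ioi (0:ℝ),
      ENNReal.ofReal ((x * y * z) ^ (-γ - 1) * (1 - Real.exp (-(x * y)))
        * (1 - Real.exp (-(x * z))) * (1 - Real.exp (-(y * z)))) < ⊤ := by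
  set s : ℝ := (3*γ-2)/4 with hsdef
  have hs1 : γ - 1 < s := by rw [hsdef]; linarith
  have hs2 : s < γ/2 := by rw [hsdef]; linarith
  rw [split_dom _ one_pos]
  have I1 : ∫⁻ x in Ioc (0:ℝ) 1, (∫⁻ y in Ioi (0:ℝ), ∫⁻ z in Ioi (0:ℝ),
      ENNReal.ofReal ((x * y * z) ^ (-γ - 1) * (1 - Real.exp (-(x * y)))
        * (1 - Real.exp (-(x * z))) * (1 - Real.exp (-(y * z)))))
      ≤ ∫⁻ x in Ioc (0:ℝ) 1, (ENNReal.ofReal ((1/(s-γ+1) + 1/(γ-s))/(1-s) * x ^ (1-γ))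
        + ENNReal.ofReal ((1/(s-γ+1) + 1/(γ-s)) * (1/(s-γ+1) + 1/(γ-s)) * x ^ (γ-2*s-1))) := by
    refine setLIntegral_mono' measurableSet_Ioc (fun x hx => ?_)
    rw [split_dom _ hx.1]
    exact add_le_add (P1 h1 h2 hs1 hs2 hx.1) (P3 h1 h2 hs1 hs2 hx.1)
  have I2 : ∫⁻ x in Ioi (1:ℝ), (∫⁻ y in Ioi (0:ℝ), ∫⁻ z in Ioi (0:ℝ),
      ENNReal.ofReal ((x * y * z) ^ (-γ - 1) * (1 - Real.exp (-(x * y)))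
        * (1 - Real.exp (-(x * z))) * (1 - Real.exp (-(y * z)))))
      ≤ ∫⁻ x in Ioi (1:ℝ), (ENNReal.ofReal ((1/(s-γ+1) + 1/(γ-s)) * (1/(1-s) + 1/s) * x ^ (2*s-γ-1))
        + ENNReal.ofReal ((1/(s-γ+1) + 1/(γ-s))/(γ-s) * x ^ (-γ-1))) := by
    refine setLIntegral_mono' measurableSet_Ioi (fun x hx => ?_)
    have hx0 : (0:ℝ) < x := lt_trans one_pos hx
    rw [split_dom _ hx0]
    exact add_le_add (P2 h1 h2 hs1 hs2 hx0) (P4 h1 h2 hs1 hs2 hx0)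
  refine lt_of_le_of_lt (add_le_add I1 I2) ?_
  have m1 : Measurable fun x : ℝ =>
      ENNReal.ofReal ((1/(s-γ+1) + 1/(γ-s))/(1-s) * x ^ (1-γ)) := by measurability
  have m2 : Measurable fun x : ℝ =>
      ENNReal.ofReal ((1/(s-γ+1) + 1/(γ-s)) * (1/(1-s) + 1/s) * x ^ (2*s-γ-1)) := by measurability
  rw [lintegral_add_left m1, lintegral_add_left m2]
  have e1 := lint_Ioc_pow_lt_top (C := (1/(s-γ+1) + 1/(γ-s))/(1-s)) (p := 1-γ) (by linarith)
  have e2 := lint_Ioc_pow_lt_top (C := (1/(s-γ+1) + 1/(γ-s)) * (1/(s-γ+1) + 1/(γ-s)))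
    (p := γ-2*s-1) (by rw [hsdef]; linarith)
  have e3 := lint_Ioi_pow_lt_top (C := (1/(s-γ+1) + 1/(γ-s)) * (1/(1-s) + 1/s))
    (p := 2*s-γ-1) (by rw [hsdef]; linarith)
  have e4 := lint_Ioi_pow_lt_top (C := (1/(s-γ+1) + 1/(γ-s))/(γ-s)) (p := -γ-1) (by linarith)
  exact ENNReal.add_lt_top.2 ⟨ENNReal.add_lt_top.2 ⟨e1, e2⟩, ENNReal.add_lt_top.2 ⟨e3, e4⟩⟩
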